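/- Let T* > 0, let μ be the exponential distribution with rate 1 on [0,∞) (density e^{−x}), and let λ : [0,T*] → ℝ be continuous with λ(s) > 0 for all s. Define Z : [0,∞) → ℝ by Z(x) = λ(x)·exp(∫₀ˣ (1−λ(s)) ds) for x ≤ T*, and Z(x) = exp(∫₀^{T*} (1−λ(s)) ds) for x > T*. Then ∫ Z dμ = 1; in particular Z·μ is a probability measure on [0,∞). -/

import Mathlib

open MeasureTheory intervalIntegral Real

/-- The exponential distribution with rate 1 on `[0,∞)`, as a measure on `ℝ`. -/
noncomputable def expMeasure1 : Measure ℝ :=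
  (volume.restrict (Set.Ici (0:ℝ))).withDensity (fun x => ENNReal.ofReal (Real.exp (-x)))

/-- The Girsanov-type density `Z^λ` integrates to one against the standard exponential
reference measure; in particular `Z^λ · μ` is a probability measure. -/
theorem stmt2 (Tstar : ℝ) (hT : 0 < Tstar)
    (l : ℝ → ℝ) (hc : ContinuousOn l (Set.Icc 0 Tstar))
    (hpos : ∀ s ∈ Set.Icc (0:ℝ) Tstar, 0 < l s)
    (Z : ℝ → ℝ)
    (hZ : ∀ x, 0 ≤ x → Z x =
      if x ≤ Tstar then l x * Real.exp (∫ s in (0:ℝ)..x, (1 - l s))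
      else Real.exp (∫ s in (0:ℝ)..Tstar, (1 - l s))) :
    (∫ x, Z x ∂expMeasure1) = 1 ∧
    IsProbabilityMeasure (expMeasure1.withDensity (fun x => ENNReal.ofReal (Z x))) := by
  have hTle : (0:ℝ) ≤ Tstar := hT.le
  set Λ : ℝ → ℝ := fun x => ∫ s in (0:ℝ)..x, l s with hΛdef
  -- basic integrability facts
  have hintl : IntervalIntegrable l volume 0 Tstar := by
    apply ContinuousOn.intervalIntegrable
    rwa [Set.uIcc_of_le hTle]
  have hintx : ∀ x ∈ Set.Icc (0:ℝ) Tstar, IntervalIntegrable l volume 0 x := by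
    intro x hx
    refine hintl.mono_set ?_
    rw [Set.uIcc_of_le hx.1, Set.uIcc_of_le hTle]
    exact Set.Icc_subset_Icc le_rfl hx.2
  have hLcont : ContinuousOn Λ (Set.Icc 0 Tstar) := by
    have h1 : IntegrableOn l (Set.uIcc 0 Tstar) volume := by
      rw [Set.uIcc_of_le hTle]; exact hc.integrableOn_Icc
    have := intervalIntegral.continuousOn_primitive_interval h1
    rwa [Set.uIcc_of_le hTle] at this
  -- pointwise rewriting of the sub-integral
  have hsub : ∀ x ∈ Set.Icc (0:ℝ) Tstar,
      (∫ s in (0:ℝ)..x, (1 - l s)) = x - Λ x := by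
    intro x hx
    rw [intervalIntegral.integral_sub intervalIntegrable_const (hintx x hx)]
    simp
    rfl
  -- the integrand on [0, Tstar]
  have hZ1 : ∀ x ∈ Set.Icc (0:ℝ) Tstar,
      Real.exp (-x) * Z x = l x * Real.exp (-Λ x) := by
    intro x hx
    rw [hZ x hx.1, if_pos hx.2, hsub x hx]
    calc Real.exp (-x) * (l x * Real.exp (x - Λ x))
        = l x * (Real.exp (-x) * Real.exp (x - Λ x)) := by ring
      _ = l x * Real.exp (-Λ x) := by rw [← Real.exp_add]; congr 1; ring
  -- the integrand on (Tstar, ∞)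
  have hZ2 : ∀ x ∈ Set.Ioi Tstar,
      Real.exp (-x) * Z x = Real.exp (Tstar - Λ Tstar) * Real.exp (-x) := by
    intro x hx
    have hx' : Tstar < x := hx
    rw [hZ x (hTle.trans hx'.le), if_neg (not_le.mpr hx'),
      hsub Tstar ⟨hTle, le_rfl⟩]
    ring
  -- FTC computation on [0, Tstar]
  have hcontF : ContinuousOn (fun x => l x * Real.exp (-Λ x)) (Set.Icc 0 Tstar) :=
    hc.mul (Real.continuous_exp.comp_continuousOn hLcont.neg)
  have key : (∫ x in (0:ℝ)..Tstar, l x * Real.exp (-Λ x))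
      = 1 - Real.exp (-Λ Tstar) := by
    have hderiv : ∀ x ∈ Set.Ioo (0:ℝ) Tstar,
        HasDerivWithinAt (fun y => -Real.exp (-Λ y)) (l x * Real.exp (-Λ x)) (Set.Ioi x) x := by
      intro x hx
      have hxIcc : x ∈ Set.Icc (0:ℝ) Tstar := Set.Ioo_subset_Icc_self hx
      have hca : ContinuousAt l x :=
        hc.continuousAt (Icc_mem_nhds hx.1 hx.2)
      have hsm : StronglyMeasurableAtFilter l (nhds x) volume :=
        (hc.mono Set.Ioo_subset_Icc_self).stronglyMeasurableAtFilter isOpen_Ioo x hx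
      have hΛd : HasDerivAt Λ (l x) x :=
        intervalIntegral.integral_hasDerivAt_right (hintx x hxIcc) hsm hca
      have h1 : HasDerivAt (fun y => -Real.exp (-Λ y))
          (-(Real.exp (-Λ x) * -(l x))) x := by
        exact ((hΛd.neg).exp).neg
      have h2 : -(Real.exp (-Λ x) * -(l x)) = l x * Real.exp (-Λ x) := by ring
      rw [h2] at h1
      exact h1.hasDerivWithinAt
    have hcF : ContinuousOn (fun y => -Real.exp (-Λ y)) (Set.Icc 0 Tstar) :=
      (Real.continuous_exp.comp_continuousOn hLcont.neg).neg
    have hintF : IntervalIntegrable (fun x => l x * Real.exp (-Λ x)) volume 0 Tstar := by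
      apply ContinuousOn.intervalIntegrable
      rwa [Set.uIcc_of_le hTle]
    have := intervalIntegral.integral_eq_sub_of_hasDeriv_right_of_le hTle hcF hderiv hintF
    rw [this]
    have hΛ0 : Λ 0 = 0 := intervalIntegral.integral_same
    rw [hΛ0]
    simp [Real.exp_zero]
    ring
  -- integrability over the two pieces
  have hI1 : IntegrableOn (fun x => Real.exp (-x) * Z x) (Set.Icc 0 Tstar) volume := by
    refine (hcontF.integrableOn_Icc).congr_fun (fun x hx => (hZ1 x hx).symm) measurableSet_Icc
  have hI2 : IntegrableOn (fun x => Real.exp (-x) * Z x) (Set.Ioi Tstar) volume := by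
    have hbase : IntegrableOn (fun x => Real.exp (Tstar - Λ Tstar) * Real.exp (-x))
        (Set.Ioi Tstar) volume := by
      have := (exp_neg_integrableOn_Ioi Tstar (b := 1) one_pos)
      simpa [IntegrableOn] using this.const_mul (Real.exp (Tstar - Λ Tstar))
    exact hbase.congr_fun (fun x hx => (hZ2 x hx).symm) measurableSet_Ioi
  have hIci : IntegrableOn (fun x => Real.exp (-x) * Z x) (Set.Ici 0) volume := by
    rw [← Set.Icc_union_Ioi_eq_Ici hTle]
    exact hI1.union hI2
  -- the value of the Lebesgue-side integral
  have hdisj : Disjoint (Set.Icc (0:ℝ) Tstar) (Set.Ioi Tstar) := by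
    rw [Set.disjoint_left]
    intro a ha ha'
    exact absurd ha.2 (not_le.mpr ha')
  have hsplit : (∫ x in Set.Ici (0:ℝ), Real.exp (-x) * Z x)
      = (∫ x in Set.Icc (0:ℝ) Tstar, Real.exp (-x) * Z x)
        + (∫ x in Set.Ioi Tstar, Real.exp (-x) * Z x) := by
    rw [← Set.Icc_union_Ioi_eq_Ici hTle]
    exact setIntegral_union hdisj measurableSet_Ioi hI1 hI2
  have hpiece1 : (∫ x in Set.Icc (0:ℝ) Tstar, Real.exp (-x) * Z x)
      = 1 - Real.exp (-Λ Tstar) := by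
    rw [MeasureTheory.integral_Icc_eq_integral_Ioc,
      ← intervalIntegral.integral_of_le hTle]
    rw [intervalIntegral.integral_congr (g := fun x => l x * Real.exp (-Λ x)) ?_]
    · exact key
    · intro x hx
      rw [Set.uIcc_of_le hTle] at hx
      exact hZ1 x hx
  have hpiece2 : (∫ x in Set.Ioi Tstar, Real.exp (-x) * Z x) = Real.exp (-Λ Tstar) := by
    rw [setIntegral_congr_fun measurableSet_Ioi hZ2, MeasureTheory.integral_const_mul,
      integral_exp_neg_Ioi, ← Real.exp_add]
    congr 1; ring
  have hval : (∫ x in Set.Ici (0:ℝ), Real.exp (-x) * Z x) = 1 := by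
    rw [hsplit, hpiece1, hpiece2]; ring
  -- convert to the withDensity integral
  have hmeasf : Measurable fun x : ℝ => Real.toNNReal (Real.exp (-x)) :=
    (Real.continuous_exp.comp continuous_neg).measurable.real_toNNReal
  have hsmul : ∀ x : ℝ, (Real.toNNReal (Real.exp (-x))) • Z x = Real.exp (-x) * Z x := by
    intro x
    rw [NNReal.smul_def, Real.coe_toNNReal _ (Real.exp_pos _).le, smul_eq_mul]
  have hwd : expMeasure1 = (volume.restrict (Set.Ici (0:ℝ))).withDensity
      (fun x => ((Real.toNNReal (Real.exp (-x)) : NNReal) : ENNReal)) := rfl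
  have hint : (∫ x, Z x ∂expMeasure1) = 1 := by
    rw [hwd, integral_withDensity_eq_integral_smul hmeasf]
    simp_rw [hsmul]
    exact hval
  have hintegrable : Integrable Z expMeasure1 := by
    rw [hwd, integrable_withDensity_iff_integrable_smul hmeasf]
    have : (fun x : ℝ => (Real.toNNReal (Real.exp (-x))) • Z x)
        = fun x => Real.exp (-x) * Z x := funext hsmul
    rw [this]
    exact hIci
  have hnn : ∀ x : ℝ, 0 ≤ x → 0 ≤ Z x := by
    intro x hx
    rw [hZ x hx]
    split_ifs with h
    · exact mul_nonneg (hpos x ⟨hx, h⟩).le (Real.exp_pos _).le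
    · exact (Real.exp_pos _).le
  have hae : 0 ≤ᵐ[expMeasure1] Z := by
    have h1 : ∀ᵐ x ∂(volume.restrict (Set.Ici (0:ℝ))), 0 ≤ Z x :=
      (ae_restrict_iff' measurableSet_Ici).2 (Filter.Eventually.of_forall hnn)
    exact h1.filter_mono (withDensity_absolutelyContinuous
      (volume.restrict (Set.Ici (0:ℝ))) _).ae_le
  refine ⟨hint, ?_⟩
  constructor
  rw [withDensity_apply _ MeasurableSet.univ, Measure.restrict_univ,
    ← ofReal_integral_eq_lintegral_ofReal hintegrable hae, hint, ENNReal.ofReal_one]
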